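/- Lower bound on suboptimality: let K_* ∈ S satisfy N_{K_*} = 0 with P := R + Bᵀ X_* B ≻ 0, and let K ∈ S with value matrix X and Y solving A_K Y A_Kᵀ + Σ = Y with Σ ≻ 0. Then f(K) − f(K_*) = Tr((K−K_*)ᵀ P (K−K_*) Y) ≥ λ₁(Y) λ₁(P) ‖K − K_*‖_F², where λ₁ denotes the smallest eigenvalue. -/

import Mathlib

open Matrix
open scoped ENNReal

/-- Spectral radius of a real square matrix, computed over ℂ. -/
noncomputable def specRad {n : ℕ} (A : Matrix (Fin n) (Fin n) ℝ) : ℝ≥0∞ :=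
  spectralRadius ℂ (A.map Complex.ofReal)

/-- A real square matrix is Schur stable if its spectral radius is `< 1`. -/
def IsSchur {n : ℕ} (A : Matrix (Fin n) (Fin n) ℝ) : Prop := specRad A < 1

section Helpers

open Filter Topology
open scoped NNReal

private lemma matStmt12.psdShift {n : ℕ} {Y : Matrix (Fin n) (Fin n) ℝ} (hY : Y.IsHermitian) :
    (Y - (⨅ i, hY.eigenvalues i) • 1).PosSemidef := by
  rcases isEmpty_or_nonempty (Fin n) with h | h
  · constructor
    · ext i j; exact (h.false i).elim
    · intro x; simp [Subsingleton.elim x 0]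
  · set l := ⨅ i, hY.eigenvalues i with hl
    have h1 : (1 : Matrix (Fin n) (Fin n) ℝ)
        = (hY.eigenvectorUnitary : Matrix (Fin n) (Fin n) ℝ) * 1 *
          (star (hY.eigenvectorUnitary : Matrix (Fin n) (Fin n) ℝ)) := by
      rw [Matrix.mul_one, (Matrix.mem_unitaryGroup_iff).mp hY.eigenvectorUnitary.2]
    have hst := hY.spectral_theorem
    have key : Y - l • 1
        = (hY.eigenvectorUnitary : Matrix (Fin n) (Fin n) ℝ) *
          (diagonal (fun i => hY.eigenvalues i - l)) *
          (star (hY.eigenvectorUnitary : Matrix (Fin n) (Fin n) ℝ)) := by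
      calc Y - l • 1 = (hY.eigenvectorUnitary : Matrix (Fin n) (Fin n) ℝ) *
          (diagonal (RCLike.ofReal ∘ hY.eigenvalues) - l • 1) *
          (star (hY.eigenvectorUnitary : Matrix (Fin n) (Fin n) ℝ)) := by
            rw [Unitary.conjStarAlgAut_apply] at hst; rw [Matrix.mul_sub, Matrix.sub_mul, ← hst]
            congr 1
            rw [Matrix.mul_smul, Matrix.smul_mul, ← h1]
        _ = _ := by
            congr 2
            rw [RCLike.ofReal_real_eq_id, Matrix.smul_one_eq_diagonal,
              ← Matrix.diagonal_sub]
            rfl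
    rw [key]
    refine (Matrix.posSemidef_diagonal_iff.mpr ?_).mul_mul_conjTranspose_same _
    intro i
    simp only [sub_nonneg]
    exact ciInf_le (Finite.bddBelow_range _) i

private lemma matStmt12.diagNonneg {n : ℕ} {A : Matrix (Fin n) (Fin n) ℝ}
    (hA : A.PosSemidef) (i : Fin n) : 0 ≤ A i i := by
  have := hA.dotProduct_mulVec_nonneg (Pi.single i 1)
  simpa [dotProduct, Pi.single_apply, mulVec] using this

private lemma matStmt12.traceNonneg {n : ℕ} {A : Matrix (Fin n) (Fin n) ℝ}
    (hA : A.PosSemidef) : 0 ≤ A.trace :=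
  Finset.sum_nonneg fun i _ => matStmt12.diagNonneg hA i

private lemma matStmt12.traceMulNonneg {n : ℕ} {M N : Matrix (Fin n) (Fin n) ℝ}
    (hM : M.PosSemidef) (hN : N.PosSemidef) : 0 ≤ (M * N).trace := by
  obtain ⟨B, rfl⟩ : ∃ B : Matrix (Fin n) (Fin n) ℝ, N = Bᴴ * B := by
    refine ⟨diagonal (fun i => Real.sqrt (hN.1.eigenvalues i)) *
      star (hN.1.eigenvectorUnitary : Matrix (Fin n) (Fin n) ℝ), ?_⟩
    conv_lhs => rw [hN.1.spectral_theorem, Unitary.conjStarAlgAut_apply]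
    rw [conjTranspose_mul, ← star_eq_conjTranspose, star_star, diagonal_conjTranspose]
    simp only [← Matrix.mul_assoc]
    congr 1
    rw [Matrix.mul_assoc, diagonal_mul_diagonal]
    congr 2
    funext i
    simp [Real.mul_self_sqrt (hN.eigenvalues_nonneg i)]
  have h : (M * (Bᴴ * B)).trace = (B * M * Bᴴ).trace := by
    rw [← Matrix.mul_assoc, Matrix.trace_mul_comm, ← Matrix.mul_assoc]
  rw [h]
  exact matStmt12.traceNonneg (hM.mul_mul_conjTranspose_same B)

private lemma matStmt12.traceLower {n : ℕ} {Y M : Matrix (Fin n) (Fin n) ℝ}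
    (hY : Y.IsHermitian) (hM : M.PosSemidef) :
    (⨅ i, hY.eigenvalues i) * M.trace ≤ (M * Y).trace := by
  have h := matStmt12.traceMulNonneg hM (matStmt12.psdShift hY)
  rw [Matrix.mul_sub, Matrix.trace_sub, Matrix.mul_smul, Matrix.mul_one,
    Matrix.trace_smul, smul_eq_mul, sub_nonneg] at h
  exact h

private lemma matStmt12.quadLower {n : ℕ} {Y : Matrix (Fin n) (Fin n) ℝ}
    (hY : Y.IsHermitian) (x : Fin n → ℝ) :
    (⨅ i, hY.eigenvalues i) * (x ⬝ᵥ x) ≤ x ⬝ᵥ (Y *ᵥ x) := by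
  have h := (matStmt12.psdShift hY).dotProduct_mulVec_nonneg x
  rw [Matrix.sub_mulVec, dotProduct_sub, Matrix.smul_mulVec, Matrix.one_mulVec,
    dotProduct_smul, smul_eq_mul, sub_nonneg, star_trivial] at h
  exact h

private lemma matStmt12.normPowTendstoZero {Alg : Type*} [NormedRing Alg]
    [NormedAlgebra ℂ Alg] [CompleteSpace Alg] (a : Alg) (h : spectralRadius ℂ a < 1) :
    Tendsto (fun k : ℕ => ‖a ^ k‖) atTop (𝓝 0) := by
  obtain ⟨r, hr1, hr2⟩ := ENNReal.lt_iff_exists_nnreal_btwn.mp h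
  have hgel := spectrum.pow_nnnorm_pow_one_div_tendsto_nhds_spectralRadius a
  have hev : ∀ᶠ k : ℕ in atTop, (‖a ^ k‖₊ : ℝ≥0∞) ^ (1 / (k:ℝ)) < (r : ℝ≥0∞) :=
    hgel.eventually_lt_const hr1
  have hr2' : (r : ℝ) < 1 := by exact_mod_cast ENNReal.coe_lt_one_iff.mp hr2
  have hbound : ∀ᶠ k : ℕ in atTop, ‖a ^ k‖ ≤ (r : ℝ) ^ k := by
    filter_upwards [hev, eventually_ge_atTop 1] with k hk hk1
    have hk0 : (k : ℝ) ≠ 0 := by positivity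
    have := ENNReal.rpow_le_rpow hk.le (by positivity : (0:ℝ) ≤ (k:ℝ))
    rw [← ENNReal.rpow_mul, one_div, inv_mul_cancel₀ hk0, ENNReal.rpow_one] at this
    rw [ENNReal.rpow_natCast] at this
    have := ENNReal.coe_le_coe.mp (by simpa [← ENNReal.coe_pow] using this)
    calc ‖a ^ k‖ = ((‖a ^ k‖₊ : ℝ≥0) : ℝ) := rfl
      _ ≤ ((r ^ k : ℝ≥0) : ℝ) := by exact_mod_cast this
      _ = (r:ℝ)^k := by push_cast; ring
  have hpow : Tendsto (fun k : ℕ => (r:ℝ) ^ k) atTop (𝓝 0) :=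
    tendsto_pow_atTop_nhds_zero_of_lt_one r.2 hr2'
  exact squeeze_zero' (Eventually.of_forall fun k => norm_nonneg _) hbound hpow

attribute [local instance] Matrix.linftyOpNormedRing Matrix.linftyOpNormedAlgebra

private lemma matStmt12.lyapPSD {n : ℕ} {E Sig Y : Matrix (Fin n) (Fin n) ℝ}
    (hE : spectralRadius ℂ (E.map Complex.ofReal) < 1)
    (hSig : Sig.PosSemidef) (hY : E * Y * Eᵀ + Sig = Y) (hYh : Y.IsHermitian) :
    Y.PosSemidef := by
  by_contra hc
  have hex : ∃ v : Fin n → ℝ, v ⬝ᵥ (Y *ᵥ v) < 0 := by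
    by_contra h2
    push_neg at h2
    exact hc (Matrix.PosSemidef.of_dotProduct_mulVec_nonneg hYh fun x => by simpa using h2 x)
  obtain ⟨v, hv⟩ := hex
  set l := ⨅ i, hYh.eigenvalues i with hldef
  have hquad := matStmt12.quadLower hYh
  have hvv : 0 ≤ v ⬝ᵥ v :=
    Finset.sum_nonneg fun i _ => mul_self_nonneg (v i)
  have hl : l < 0 := by nlinarith [hquad v]
  set w : ℕ → (Fin n → ℝ) := fun k => ((Eᵀ) ^ k) *ᵥ v with hwdef
  have hkey : ∀ u : Fin n → ℝ, (Eᵀ *ᵥ u) ⬝ᵥ (Y *ᵥ (Eᵀ *ᵥ u))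
      = u ⬝ᵥ (Y *ᵥ u) - u ⬝ᵥ (Sig *ᵥ u) := by
    intro u
    have hEY : E * Y * Eᵀ = Y - Sig := eq_sub_of_add_eq hY
    have hflip : ∀ z : Fin n → ℝ, (Eᵀ *ᵥ u) ⬝ᵥ z = u ⬝ᵥ (E *ᵥ z) := by
      intro z
      rw [Matrix.mulVec_transpose, ← Matrix.dotProduct_mulVec]
    calc (Eᵀ *ᵥ u) ⬝ᵥ (Y *ᵥ (Eᵀ *ᵥ u))
        = u ⬝ᵥ (E *ᵥ (Y *ᵥ (Eᵀ *ᵥ u))) := hflip _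
      _ = u ⬝ᵥ ((E * Y * Eᵀ) *ᵥ u) := by
          rw [← Matrix.mulVec_mulVec, ← Matrix.mulVec_mulVec]
      _ = u ⬝ᵥ (Y *ᵥ u) - u ⬝ᵥ (Sig *ᵥ u) := by
          rw [hEY, Matrix.sub_mulVec, dotProduct_sub]
  have hmono : ∀ k, w k ⬝ᵥ (Y *ᵥ w k) ≤ v ⬝ᵥ (Y *ᵥ v) := by
    intro k
    induction k with
    | zero => simp [hwdef]
    | succ k ih =>
        have hwsucc : w (k+1) = Eᵀ *ᵥ w k := by
          simp only [hwdef, pow_succ']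
          rw [← Matrix.mulVec_mulVec]
        have hsig := hSig.dotProduct_mulVec_nonneg (w k)
        rw [star_trivial] at hsig
        rw [hwsucc, hkey (w k)]
        linarith
  have hlow : ∀ k, (v ⬝ᵥ (Y *ᵥ v)) / l ≤ w k ⬝ᵥ w k := by
    intro k
    rw [div_le_iff_of_neg hl]
    calc (w k ⬝ᵥ w k) * l = l * (w k ⬝ᵥ w k) := by ring
      _ ≤ w k ⬝ᵥ (Y *ᵥ w k) := hquad (w k)
      _ ≤ v ⬝ᵥ (Y *ᵥ v) := hmono k
  haveI : CompleteSpace (Matrix (Fin n) (Fin n) ℂ) := FiniteDimensional.complete ℂ _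
  set a : Matrix (Fin n) (Fin n) ℂ := E.map Complex.ofReal with hadef
  have hnorm : Tendsto (fun k : ℕ => ‖a ^ k‖) atTop (𝓝 0) :=
    matStmt12.normPowTendstoZero a hE
  have hmapk : ∀ k : ℕ, a ^ k = (E ^ k).map Complex.ofReal := by
    intro k
    have := map_pow (Complex.ofRealHom.mapMatrix) E k
    simp only [RingHom.mapMatrix_apply] at this; exact this.symm
  have hentry : ∀ (M : Matrix (Fin n) (Fin n) ℂ) (i j : Fin n), ‖M i j‖ ≤ ‖M‖ := by
    intro M i j
    have h1 : M i j = (M *ᵥ Pi.single j 1) i := by simp [Matrix.mulVec_single]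
    have h2 : ‖(M *ᵥ Pi.single j 1) i‖ ≤ ‖M *ᵥ Pi.single j 1‖ := norm_le_pi_norm _ i
    have h3 : ‖M *ᵥ Pi.single j 1‖ ≤ ‖M‖ * ‖(Pi.single j 1 : Fin n → ℂ)‖ :=
      Matrix.linfty_opNorm_mulVec M _
    have h4 : ‖(Pi.single j 1 : Fin n → ℂ)‖ ≤ 1 := by
      refine (pi_norm_le_iff_of_nonneg zero_le_one).mpr fun i => ?_
      rcases eq_or_ne i j with rfl | hij
      · simp
      · simp [Pi.single_apply, hij]
    calc ‖M i j‖ = ‖(M *ᵥ Pi.single j 1) i‖ := by rw [← h1]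
      _ ≤ ‖M *ᵥ Pi.single j 1‖ := h2
      _ ≤ ‖M‖ * ‖(Pi.single j 1 : Fin n → ℂ)‖ := h3
      _ ≤ ‖M‖ * 1 := by
          have : (0:ℝ) ≤ ‖M‖ := norm_nonneg _
          nlinarith
      _ = ‖M‖ := mul_one _
  have habs : ∀ i j : Fin n, Tendsto (fun k : ℕ => (E ^ k) i j) atTop (𝓝 0) := by
    intro i j
    refine squeeze_zero_norm (fun k => ?_) hnorm
    have : ((E ^ k) i j : ℂ) = (a ^ k) i j := by rw [hmapk k]; rfl
    calc ‖(E ^ k) i j‖ = ‖((E ^ k) i j : ℂ)‖ := (Complex.norm_real _).symm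
      _ = ‖(a ^ k) i j‖ := by rw [this]
      _ ≤ ‖a ^ k‖ := hentry _ i j
  have hwc : ∀ i : Fin n, Tendsto (fun k : ℕ => w k i) atTop (𝓝 0) := by
    intro i
    have hfor : ∀ k : ℕ, w k i = ∑ j, (E ^ k) j i * v j := by
      intro k
      simp [hwdef, Matrix.mulVec, dotProduct, ← Matrix.transpose_pow, Matrix.transpose_apply]
    rw [show (fun k : ℕ => w k i) = fun k => ∑ j, (E ^ k) j i * v j from funext hfor]
    have := tendsto_finset_sum (Finset.univ : Finset (Fin n))
      (fun j _ => (habs j i).mul_const (v j))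
    simpa using this
  have hw0 : Tendsto (fun k : ℕ => w k ⬝ᵥ w k) atTop (𝓝 0) := by
    have : ∀ k : ℕ, w k ⬝ᵥ w k = ∑ i, w k i * w k i := by intro k; rfl
    rw [show (fun k : ℕ => w k ⬝ᵥ w k) = fun k => ∑ i, w k i * w k i from funext this]
    have := tendsto_finset_sum (Finset.univ : Finset (Fin n))
      (fun i _ => (hwc i).mul (hwc i))
    simpa using this
  have hfinal : (v ⬝ᵥ (Y *ᵥ v)) / l ≤ 0 :=
    ge_of_tendsto hw0 (Eventually.of_forall hlow)
  have : 0 < (v ⬝ᵥ (Y *ᵥ v)) / l := div_pos_of_neg_of_neg hv hl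
  linarith

end Helpers

/-- Lower bound on suboptimality:
`f(K) − f(K_*) = Tr((K−K_*)ᵀ P (K−K_*) Y) ≥ λ₁(Y) λ₁(P) ‖K − K_*‖_F²`. -/
theorem stmt12 {n m : ℕ} (A : Matrix (Fin n) (Fin n) ℝ) (B : Matrix (Fin n) (Fin m) ℝ)
    (Q : Matrix (Fin n) (Fin n) ℝ) (R : Matrix (Fin m) (Fin m) ℝ)
    (Sig : Matrix (Fin n) (Fin n) ℝ)
    (hQ : Qᵀ = Q) (hR : Rᵀ = R) (hSig : Sig.PosDef)
    (Ks : Matrix (Fin m) (Fin n) ℝ) (Xs : Matrix (Fin n) (Fin n) ℝ)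
    (hXs : Xsᵀ = Xs) (hSs : IsSchur (A - B * Ks))
    (hLyaps : (A - B * Ks)ᵀ * Xs * (A - B * Ks) + Q + Ksᵀ * R * Ks = Xs)
    (hNs : R * Ks - Bᵀ * Xs * (A - B * Ks) = 0)
    (hPs : (R + Bᵀ * Xs * B).PosDef)
    (K : Matrix (Fin m) (Fin n) ℝ) (X Y : Matrix (Fin n) (Fin n) ℝ)
    (hX : Xᵀ = X) (hS : IsSchur (A - B * K))
    (hLyap : (A - B * K)ᵀ * X * (A - B * K) + Q + Kᵀ * R * K = X)
    (hY : (A - B * K) * Y * (A - B * K)ᵀ + Sig = Y)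
    (hYh : Y.IsHermitian) :
    (X * Sig).trace - (Xs * Sig).trace
      = ((K - Ks)ᵀ * (R + Bᵀ * Xs * B) * (K - Ks) * Y).trace ∧
    (⨅ i, hYh.eigenvalues i) * (⨅ i, hPs.1.eigenvalues i)
        * ((K - Ks)ᵀ * (K - Ks)).trace
      ≤ (X * Sig).trace - (Xs * Sig).trace := by
  have hNT : Ksᵀ * R - (A - B * Ks)ᵀ * Xs * B = 0 := by
    have h := congrArg Matrix.transpose hNs
    simpa [Matrix.transpose_sub, Matrix.transpose_mul, hR, hXs, Matrix.mul_assoc] using h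
  -- the key algebraic identity
  have hz1 : (A - B * K)ᵀ * X * (A - B * K) + Q + Kᵀ * R * K - X = 0 :=
    sub_eq_zero.mpr hLyap
  have hz2 : (A - B * Ks)ᵀ * Xs * (A - B * Ks) + Q + Ksᵀ * R * Ks - Xs = 0 :=
    sub_eq_zero.mpr hLyaps
  have key : X - Xs = (A - B * K)ᵀ * (X - Xs) * (A - B * K)
      + (K - Ks)ᵀ * (R + Bᵀ * Xs * B) * (K - Ks) := by
    have expand : X - Xs - ((A - B * K)ᵀ * (X - Xs) * (A - B * K)
          + (K - Ks)ᵀ * (R + Bᵀ * Xs * B) * (K - Ks))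
        = -((A - B * K)ᵀ * X * (A - B * K) + Q + Kᵀ * R * K - X)
          + ((A - B * Ks)ᵀ * Xs * (A - B * Ks) + Q + Ksᵀ * R * Ks - Xs)
          + (K - Ks)ᵀ * (R * Ks - Bᵀ * Xs * (A - B * Ks))
          + (Ksᵀ * R - (A - B * Ks)ᵀ * Xs * B) * (K - Ks) := by
      simp only [Matrix.transpose_sub, Matrix.transpose_mul, Matrix.sub_mul, Matrix.mul_sub,
        Matrix.add_mul, Matrix.mul_add, Matrix.mul_assoc]
      abel
    rw [hz1, hz2, hNs, hNT, Matrix.mul_zero, Matrix.zero_mul] at expand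
    simp only [neg_zero, add_zero, zero_add] at expand
    exact sub_eq_zero.mp expand
  set E := A - B * K with hEdef
  set P := R + Bᵀ * Xs * B with hPdef
  set M := (K - Ks)ᵀ * P * (K - Ks) with hMdef
  -- trace identity
  have hSig' : Sig = Y - E * Y * Eᵀ := eq_sub_of_add_eq' hY
  have htr1 : (X * Sig).trace - (Xs * Sig).trace = ((X - Xs) * Sig).trace := by
    rw [Matrix.sub_mul, Matrix.trace_sub]
  have hcyc : ((X - Xs) * (E * Y * Eᵀ)).trace = ((Eᵀ * (X - Xs) * E) * Y).trace := by
    have e1 : (X - Xs) * (E * Y * Eᵀ) = ((X - Xs) * E * Y) * Eᵀ := by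
      simp only [Matrix.mul_assoc]
    rw [e1, Matrix.trace_mul_comm]
    simp only [Matrix.mul_assoc]
  have hsub : X - Xs - Eᵀ * (X - Xs) * E = M := sub_eq_of_eq_add' key
  have htr2 : ((X - Xs) * Sig).trace = (M * Y).trace := by
    rw [hSig', Matrix.mul_sub, Matrix.trace_sub, hcyc, ← Matrix.trace_sub,
      ← Matrix.sub_mul, hsub]
  have hfirst : (X * Sig).trace - (Xs * Sig).trace = (M * Y).trace := htr1.trans htr2
  refine ⟨hfirst, ?_⟩
  -- Y is positive semidefinite
  have hYpsd : Y.PosSemidef := matStmt12.lyapPSD hS hSig.posSemidef hY hYh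
  have hMpsd : M.PosSemidef := by
    have := hPs.posSemidef.conjTranspose_mul_mul_same (K - Ks)
    simpa [Matrix.conjTranspose_eq_transpose_of_trivial, hMdef] using this
  have hKpsd : ((K - Ks) * (K - Ks)ᵀ).PosSemidef := by
    have := Matrix.posSemidef_self_mul_conjTranspose (K - Ks)
    simpa [Matrix.conjTranspose_eq_transpose_of_trivial] using this
  have hTrEq1 : ((K - Ks) * (K - Ks)ᵀ).trace = ((K - Ks)ᵀ * (K - Ks)).trace :=
    Matrix.trace_mul_comm _ _
  have hTrEq2 : (((K - Ks) * (K - Ks)ᵀ) * P).trace = M.trace := by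
    calc (((K - Ks) * (K - Ks)ᵀ) * P).trace
        = ((K - Ks) * ((K - Ks)ᵀ * P)).trace := by rw [Matrix.mul_assoc]
      _ = (((K - Ks)ᵀ * P) * (K - Ks)).trace := Matrix.trace_mul_comm _ _
      _ = M.trace := by rw [hMdef]
  have h1 := matStmt12.traceLower hPs.1 hKpsd
  rw [hTrEq1, hTrEq2] at h1
  have h2 := matStmt12.traceLower hYh hMpsd
  have hlY : 0 ≤ ⨅ i, hYh.eigenvalues i :=
    Real.iInf_nonneg fun i => hYpsd.eigenvalues_nonneg i
  rw [hfirst]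
  calc (⨅ i, hYh.eigenvalues i) * (⨅ i, hPs.1.eigenvalues i)
        * ((K - Ks)ᵀ * (K - Ks)).trace
      = (⨅ i, hYh.eigenvalues i)
        * ((⨅ i, hPs.1.eigenvalues i) * ((K - Ks)ᵀ * (K - Ks)).trace) := by ring
    _ ≤ (⨅ i, hYh.eigenvalues i) * M.trace := mul_le_mul_of_nonneg_left h1 hlY
    _ ≤ (M * Y).trace := h2
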